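/- For 0 < a < b and γ > 0, let F̄_X(x) = (1/((b−a) log x)) · (E₁(γx^a) − E₁(γx^b)) for x > 1, where E₁(z) = ∫_z^∞ e^{−u}/u du. If 0 < a < 1, then F̄_X(x) ∼ exp(−γ x^a) / ((b−a) γ x^a log x) as x → ∞. -/

import Mathlib

open MeasureTheory Filter

/-- The exponential integral `E₁(z) = ∫_z^∞ e^{−u}/u du`. -/
noncomputable def expIntegralE1 (z : ℝ) : ℝ := ∫ u in Set.Ioi z, Real.exp (-u) / u

lemma expNegIntegrable (z : ℝ) : IntegrableOn (fun u : ℝ => Real.exp (-u)) (Set.Ioi z) :=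
  (exp_neg_integrableOn_Ioi z one_pos).congr_fun
    (fun u _ => by simp only [neg_one_mul]) measurableSet_Ioi

lemma expIntegrable {z : ℝ} (hz : 0 < z) :
    IntegrableOn (fun u => Real.exp (-u) / u) (Set.Ioi z) := by
  have h1 : IntegrableOn (fun u : ℝ => Real.exp (-u) * (1/z)) (Set.Ioi z) :=
    (expNegIntegrable z).mul_const _
  refine Integrable.mono' h1 ?_ ?_
  · exact ((Real.measurable_exp.comp measurable_neg).div measurable_id).aestronglyMeasurable
  · filter_upwards [ae_restrict_mem measurableSet_Ioi] with u hu
    have hu' : z < u := hu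
    have hu0 : 0 < u := hz.trans hu'
    rw [Real.norm_eq_abs, abs_div, abs_of_pos (Real.exp_pos _), abs_of_pos hu0,
      div_eq_mul_one_div]
    gcongr

lemma mulExpIntegrable {z : ℝ} (hz : 0 < z) :
    IntegrableOn (fun u : ℝ => u * Real.exp (-u)) (Set.Ioi z) := by
  have := (Real.GammaIntegral_convergent (s := 2) (by norm_num)).mono_set
    (Set.Ioi_subset_Ioi hz.le)
  refine this.congr_fun (fun u hu => ?_) measurableSet_Ioi
  rw [show (2:ℝ) - 1 = 1 by norm_num]; beta_reduce; rw [Real.rpow_one, mul_comm]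

lemma integral_mul_exp_neg {z : ℝ} (hz : 0 < z) :
    ∫ u in Set.Ioi z, u * Real.exp (-u) = (z + 1) * Real.exp (-z) := by
  have h : ∫ u in Set.Ioi z, u * Real.exp (-u) = 0 - (-(z+1) * Real.exp (-z)) := by
    refine integral_Ioi_of_hasDerivAt_of_tendsto' (f := fun u => -(u+1) * Real.exp (-u))
      (fun u _ => ?_) (mulExpIntegrable hz) ?_
    · have h1 : HasDerivAt (fun u : ℝ => -(u+1)) (-1) u := by
        exact ((hasDerivAt_id u).add_const 1).neg
      have h2 : HasDerivAt (fun u : ℝ => Real.exp (-u)) (-Real.exp (-u)) u := by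
        exact ((Real.hasDerivAt_exp (-u)).comp u (hasDerivAt_neg u)).congr_deriv (by ring)
      have := h1.mul h2
      exact this.congr_deriv (by ring)
    · have h1 := Real.tendsto_pow_mul_exp_neg_atTop_nhds_zero 1
      have h0 := Real.tendsto_exp_neg_atTop_nhds_zero
      have h2 := (h1.add h0).neg
      simp only [pow_one, add_zero, neg_zero] at h2
      exact h2.congr fun u => by ring
  rw [h]; ring

lemma E1_le {z : ℝ} (hz : 0 < z) : expIntegralE1 z ≤ Real.exp (-z) / z := by
  have h : expIntegralE1 z ≤ ∫ u in Set.Ioi z, Real.exp (-u) * (1/z) := by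
    refine setIntegral_mono_on (expIntegrable hz) ((expNegIntegrable z).mul_const _)
      measurableSet_Ioi (fun u hu => ?_)
    have hu' : z < u := hu
    rw [div_eq_mul_one_div]
    gcongr
  calc expIntegralE1 z ≤ ∫ u in Set.Ioi z, Real.exp (-u) * (1/z) := h
    _ = Real.exp (-z) / z := by
        rw [integral_mul_const, integral_exp_neg_Ioi]; ring

lemma E1_ge {z : ℝ} (hz : 0 < z) :
    (z - 1) * Real.exp (-z) / z ^ 2 ≤ expIntegralE1 z := by
  have h1 : IntegrableOn (fun u : ℝ => Real.exp (-u) * (2*z) - u * Real.exp (-u)) (Set.Ioi z) :=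
    ((expNegIntegrable z).mul_const _).sub (mulExpIntegrable hz)
  have hInt : IntegrableOn (fun u : ℝ => (2*z - u) * Real.exp (-u) / z^2) (Set.Ioi z) :=
    IntegrableOn.congr_fun (h1.div_const (z^2)) (fun u _ => by ring) measurableSet_Ioi
  have h : (∫ u in Set.Ioi z, (2*z - u) * Real.exp (-u) / z^2) ≤ expIntegralE1 z := by
    refine setIntegral_mono_on hInt (expIntegrable hz) measurableSet_Ioi (fun u hu => ?_)
    have hu' : z < u := hu
    have hu0 : 0 < u := hz.trans hu'
    rw [div_le_div_iff₀ (by positivity) hu0]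
    have key : (2*z - u) * u ≤ z^2 := by nlinarith [sq_nonneg (u - z)]
    nlinarith [mul_nonneg (sub_nonneg.mpr key) (Real.exp_pos (-u)).le]
  refine le_trans (le_of_eq ?_) h
  have hcalc : (∫ u in Set.Ioi z, (2*z - u) * Real.exp (-u) / z^2)
      = ((∫ u in Set.Ioi z, Real.exp (-u)) * (2*z) - ∫ u in Set.Ioi z, u * Real.exp (-u)) / z^2 := by
    rw [← integral_mul_const, ← integral_sub ((expNegIntegrable z).mul_const _)
      (mulExpIntegrable hz), ← integral_div]
    exact setIntegral_congr_fun measurableSet_Ioi (fun u _ => by ring)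
  rw [hcalc, integral_exp_neg_Ioi, integral_mul_exp_neg hz]
  ring

lemma E1_nonneg {z : ℝ} (hz : 0 < z) : 0 ≤ expIntegralE1 z := by
  refine setIntegral_nonneg measurableSet_Ioi (fun u hu => ?_)
  have : 0 < u := hz.trans hu
  positivity

lemma E1_tendsto : Tendsto (fun z => expIntegralE1 z * (z * Real.exp z)) atTop (nhds 1) := by
  have hlo : Tendsto (fun z : ℝ => 1 - 1/z) atTop (nhds 1) := by
    have := (tendsto_inv_atTop_zero (𝕜 := ℝ)).const_sub 1
    simpa [one_div] using this
  refine tendsto_of_tendsto_of_tendsto_of_le_of_le' hlo tendsto_const_nhds ?_ ?_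
  · filter_upwards [eventually_gt_atTop (0:ℝ)] with z hz
    have h := E1_ge hz
    have hpos : 0 < z * Real.exp z := by positivity
    calc 1 - 1/z = (z - 1) * Real.exp (-z) / z^2 * (z * Real.exp z) := by
          rw [Real.exp_neg]
          field_simp
      _ ≤ expIntegralE1 z * (z * Real.exp z) := by gcongr
  · filter_upwards [eventually_gt_atTop (0:ℝ)] with z hz
    have h := E1_le hz
    calc expIntegralE1 z * (z * Real.exp z) ≤ Real.exp (-z) / z * (z * Real.exp z) := by
          gcongr
      _ = 1 := by
          rw [Real.exp_neg]
          field_simp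

theorem weibull_mixture_tail_asymptotics
    (a b γ : ℝ) (ha : 0 < a) (hab : a < b) (hγ : 0 < γ) (ha1 : a < 1) :
    Tendsto
      (fun x : ℝ =>
        ((expIntegralE1 (γ * x ^ a) - expIntegralE1 (γ * x ^ b))
            / ((b - a) * Real.log x)) /
          (Real.exp (-γ * x ^ a) / ((b - a) * γ * x ^ a * Real.log x)))
      atTop (nhds 1) := by
  have hA : Tendsto (fun x : ℝ => γ * x ^ a) atTop atTop :=
    (tendsto_rpow_atTop ha).const_mul_atTop hγ
  -- Term 1
  have hT1 : Tendsto (fun x : ℝ => expIntegralE1 (γ * x ^ a) * (γ * x ^ a * Real.exp (γ * x ^ a)))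
      atTop (nhds 1) := E1_tendsto.comp hA
  -- Term 2 tends to 0
  have hT2 : Tendsto (fun x : ℝ => expIntegralE1 (γ * x ^ b) * (γ * x ^ a * Real.exp (γ * x ^ a)))
      atTop (nhds 0) := by
    have hub : Tendsto (fun x : ℝ => x ^ (a - b)) atTop (nhds 0) := by
      have := tendsto_rpow_neg_atTop (y := b - a) (by linarith)
      refine this.congr' ?_
      filter_upwards [eventually_gt_atTop (0:ℝ)] with x hx
      rw [neg_sub]
    refine tendsto_of_tendsto_of_tendsto_of_le_of_le' tendsto_const_nhds hub ?_ ?_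
    · filter_upwards [eventually_gt_atTop (1:ℝ)] with x hx
      have hx0 : 0 < x := lt_trans one_pos hx
      have hB : 0 < γ * x ^ b := by positivity
      have := E1_nonneg hB
      positivity
    · filter_upwards [eventually_ge_atTop (1:ℝ)] with x hx
      have hx0 : 0 < x := lt_of_lt_of_le one_pos hx
      have hB : 0 < γ * x ^ b := by positivity
      have hab' : x ^ a ≤ x ^ b := Real.rpow_le_rpow_of_exponent_le hx hab.le
      have hAe : 0 ≤ γ * x ^ a * Real.exp (γ * x ^ a) := by positivity
      calc expIntegralE1 (γ * x ^ b) * (γ * x ^ a * Real.exp (γ * x ^ a))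
          ≤ Real.exp (-(γ * x ^ b)) / (γ * x ^ b) * (γ * x ^ a * Real.exp (γ * x ^ a)) := by
            gcongr
            exact E1_le hB
        _ = x ^ (a - b) * Real.exp (γ * x ^ a - γ * x ^ b) := by
            rw [Real.exp_sub, Real.rpow_sub hx0, Real.exp_neg]
            have h1 : x ^ b ≠ 0 := (Real.rpow_pos_of_pos hx0 b).ne'
            have h2 : Real.exp (γ * x ^ b) ≠ 0 := (Real.exp_pos _).ne'
            field_simp
        _ ≤ x ^ (a - b) * 1 := by
            gcongr
            rw [Real.exp_le_one_iff]
            nlinarith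
        _ = x ^ (a - b) := mul_one _
  have hmain : Tendsto (fun x : ℝ =>
      (expIntegralE1 (γ * x ^ a) - expIntegralE1 (γ * x ^ b))
        * (γ * x ^ a * Real.exp (γ * x ^ a))) atTop (nhds 1) := by
    have h := hT1.sub hT2
    rw [sub_zero] at h
    exact h.congr fun x => by ring
  refine hmain.congr' ?_
  filter_upwards [eventually_gt_atTop (1:ℝ)] with x hx
  have hx0 : (0:ℝ) < x := lt_trans one_pos hx
  have hL : Real.log x ≠ 0 := (Real.log_pos hx).ne'
  have hba : b - a ≠ 0 := by linarith
  have hxa : x ^ a ≠ 0 := (Real.rpow_pos_of_pos hx0 a).ne'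
  have hE : Real.exp (γ * x ^ a) ≠ 0 := (Real.exp_pos _).ne'
  rw [neg_mul, Real.exp_neg]
  field_simp
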